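/- With notation as above, if the ideal J_k(A) of k × k minors of A is generated by the single minor g = det(M_{IJ}), then I_Δ^{k−1} · J_2([(J_k(M))_D]) ⊆ J_{2k}([M_D]), where in this case J_2([(J_k(M))_D]) is the ideal generated by {g·g'·(z_i − z_i') : 1 ≤ i ≤ n} with g' = det(M'_{IJ}). -/

import Mathlib

/-- The ideal of `m × m` minors of a matrix. -/
def Jmin {R : Type*} [CommRing R] {ρ σ : Type*} (m : ℕ) (B : Matrix ρ σ R) : Ideal R :=
  Ideal.span (Set.range fun fg : (Fin m → ρ) × (Fin m → σ) => (B.submatrix fg.1 fg.2).det)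

/-- The doubled matrix `[M_D]`. -/
def MD {S : Type*} [CommRing S] {p r n : ℕ} (A A' : Matrix (Fin p) (Fin r) S)
    (z z' : Fin n → S) : Matrix (Fin p ⊕ Fin p) (Fin r ⊕ Fin n × Fin r) S :=
  Matrix.of fun rw cl =>
    match rw, cl with
    | Sum.inl i, Sum.inl j => A i j
    | Sum.inr i, Sum.inl j => A' i j
    | Sum.inl _, Sum.inr _ => 0
    | Sum.inr i, Sum.inr tj => (z tj.1 - z' tj.1) * A' i tj.2

/-- The `m`-th power of the span of the range of `v` is contained in the span of
products of `m` values of `v`. -/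
lemma pow_span_le {S : Type*} [CommRing S] {n : ℕ} (v : Fin n → S) :
    ∀ m, (Ideal.span (Set.range v)) ^ m ≤
      Ideal.span (Set.range fun c : Fin m → Fin n => ∏ t, v (c t))
  | 0 => by
    rw [pow_zero, Ideal.one_eq_top]
    refine le_of_eq (((Ideal.eq_top_iff_one _).mpr ?_).symm)
    exact Ideal.subset_span ⟨Fin.elim0, by simp⟩
  | (m+1) => by
    rw [pow_succ]
    refine le_trans (Ideal.mul_mono (pow_span_le v m) le_rfl) ?_
    rw [Ideal.span_mul_span']
    rw [Ideal.span_le]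
    rintro x ⟨a, ⟨c, rfl⟩, b, ⟨i, rfl⟩, rfl⟩
    refine Ideal.subset_span ⟨Fin.snoc c i, ?_⟩
    simp only [Fin.prod_univ_castSucc, Fin.snoc_castSucc, Fin.snoc_last]

/-- The key computation: choosing rows `I ⊔ I` of `[M_D]` and columns `J` in the left block
and `(c t, J t)` in the right block yields a `2k × 2k` minor equal to
`(∏ t, (z (c t) - z' (c t))) * (g * g')`. -/
lemma key_minor {S : Type*} [CommRing S] {p r n k : ℕ} (A A' : Matrix (Fin p) (Fin r) S)
    (z z' : Fin n → S) (I : Fin k → Fin p) (J : Fin k → Fin r) (c : Fin k → Fin n) :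
    (∏ t, (z (c t) - z' (c t))) * ((A.submatrix I J).det * (A'.submatrix I J).det) ∈
      Jmin (2 * k) (MD A A' z z') := by
  set e : Fin (2 * k) ≃ Fin k ⊕ Fin k := (finCongr (two_mul k)).trans finSumFinEquiv.symm
  refine Ideal.subset_span ⟨(Sum.elim (Sum.inl ∘ I) (Sum.inr ∘ I) ∘ e,
    Sum.elim (Sum.inl ∘ J) (Sum.inr ∘ fun t => (c t, J t)) ∘ e), ?_⟩
  have h1 : (MD A A' z z').submatrix (Sum.elim (Sum.inl ∘ I) (Sum.inr ∘ I) ∘ e)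
      (Sum.elim (Sum.inl ∘ J) (Sum.inr ∘ fun t => (c t, J t)) ∘ e)
      = ((MD A A' z z').submatrix (Sum.elim (Sum.inl ∘ I) (Sum.inr ∘ I))
        (Sum.elim (Sum.inl ∘ J) (Sum.inr ∘ fun t => (c t, J t)))).submatrix e e := rfl
  dsimp only
  rw [h1, Matrix.det_submatrix_equiv_self]
  have h2 : (MD A A' z z').submatrix (Sum.elim (Sum.inl ∘ I) (Sum.inr ∘ I))
      (Sum.elim (Sum.inl ∘ J) (Sum.inr ∘ fun t => (c t, J t)))
      = Matrix.fromBlocks (A.submatrix I J) 0 (A'.submatrix I J)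
          ((A'.submatrix I J) * Matrix.diagonal fun t => z (c t) - z' (c t)) := by
    ext i j
    cases i <;> cases j <;>
      simp [MD, Matrix.fromBlocks, Matrix.mul_diagonal, mul_comm]
  rw [h2, Matrix.det_fromBlocks_zero₁₂, Matrix.det_mul, Matrix.det_diagonal]
  ring

/-- if `J_k(A)` is principal, generated by the single minor `g = det(M_{IJ})`,
then `I_Δ^{k−1} · J_2([(J_k(M))_D]) ⊆ J_{2k}([M_D])`, where in this case
`J_2([(J_k(M))_D])` is generated by the `g·g'·(z_i − z'_i)`, with `g' = det(M'_{IJ})`. -/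
theorem stmt8 {S : Type*} [CommRing S] (p r n k : ℕ) (A A' : Matrix (Fin p) (Fin r) S)
    (z z' : Fin n → S) (I : Fin k → Fin p) (J : Fin k → Fin r)
    (hprin : Jmin k A = Ideal.span {(A.submatrix I J).det}) :
    (Ideal.span (Set.range fun i => z i - z' i)) ^ (k - 1) *
        Ideal.span (Set.range fun i =>
          (A.submatrix I J).det * ((A'.submatrix I J).det * (z i - z' i))) ≤
      Jmin (2 * k) (MD A A' z z') := by
  cases k with
  | zero =>
      have : (1 : S) ∈ Jmin (2 * 0) (MD A A' z z') :=
        Ideal.subset_span ⟨(Fin.elim0, Fin.elim0), by simp⟩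
      rw [(Ideal.eq_top_iff_one _).mpr this]
      exact le_top
  | succ k' =>
      simp only [Nat.add_sub_cancel]
      refine le_trans (Ideal.mul_mono (pow_span_le _ _) le_rfl) ?_
      rw [Ideal.span_mul_span', Ideal.span_le]
      rintro x ⟨a, ⟨c, rfl⟩, b, ⟨i, rfl⟩, rfl⟩
      have h := key_minor A A' z z' I J (Fin.snoc c i)
      rw [Fin.prod_univ_castSucc] at h
      simp only [Fin.snoc_castSucc, Fin.snoc_last] at h
      rw [SetLike.mem_coe]
      convert h using 1
      ring
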